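/- For r ∈ [rᵢ, r_{i+1}] and λ(r) = sqrt(r² − Σ_{m=1}^{i} a_{τ_m}²)/‖c_{τ_{i+1},…,τ_R}‖, we have r ∈ [rᵢ, r_{i+1}] if and only if λ(r) ∈ [φ_{τᵢ}⁻¹, φ_{τ_{i+1}}⁻¹]; moreover for any such r and any j ∈ {τ_{i+1},…,τ_R}, λ(r)·cⱼ ≤ aⱼ, so the scaled vector λ(r)·c restricted to the unsaturated indices satisfies the box constraints. -/

import Mathlib

/-- sqrt comparison when the left argument is positive. -/
lemma sqrt_le_sqrt_iff_left_pos {x y : ℝ} (hx : 0 < x) :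
    Real.sqrt x ≤ Real.sqrt y ↔ x ≤ y := by
  rcases le_or_gt 0 y with hy | hy
  · exact Real.sqrt_le_sqrt_iff hy
  · constructor
    · intro h
      have h1 : Real.sqrt y = 0 := Real.sqrt_eq_zero'.mpr hy.le
      have h2 : 0 < Real.sqrt x := Real.sqrt_pos.mpr hx
      linarith
    · intro h; linarith

/-- Analytic core of statement 5. -/
lemma stmt5_aux (Sc Sa p1 p2 r : ℝ) (hSc : 0 < Sc) (hSa : 0 ≤ Sa)
    (h1 : 0 < p1) (h2 : 0 < p2) (hr : 0 ≤ r) :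
    (Real.sqrt (p1 ^ 2 * Sc + Sa) ≤ r ∧ r ≤ Real.sqrt (p2 ^ 2 * Sc + Sa)) ↔
    (p1 ≤ Real.sqrt (r ^ 2 - Sa) / Real.sqrt Sc ∧
      Real.sqrt (r ^ 2 - Sa) / Real.sqrt Sc ≤ p2) := by
  have hscs : 0 < Real.sqrt Sc := Real.sqrt_pos.mpr hSc
  have e1 : p1 * Real.sqrt Sc = Real.sqrt (p1 ^ 2 * Sc) := by
    rw [Real.sqrt_mul (by positivity), Real.sqrt_sq h1.le]
  have e2 : p2 * Real.sqrt Sc = Real.sqrt (p2 ^ 2 * Sc) := by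
    rw [Real.sqrt_mul (by positivity), Real.sqrt_sq h2.le]
  have hrsq : r = Real.sqrt (r ^ 2) := (Real.sqrt_sq hr).symm
  rw [le_div_iff₀ hscs, div_le_iff₀ hscs, e1, e2]
  constructor
  · rintro ⟨ha1, ha2⟩
    have hb1 : p1 ^ 2 * Sc + Sa ≤ r ^ 2 := by
      rw [hrsq] at ha1
      exact (Real.sqrt_le_sqrt_iff (sq_nonneg r)).mp ha1
    have hb2 : r ^ 2 ≤ p2 ^ 2 * Sc + Sa := by
      rw [hrsq] at ha2
      exact (Real.sqrt_le_sqrt_iff (by nlinarith [mul_pos (pow_pos h2 2) hSc])).mp ha2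
    constructor
    · exact Real.sqrt_le_sqrt (by linarith)
    · exact Real.sqrt_le_sqrt (by linarith)
  · rintro ⟨ha1, ha2⟩
    have hb1 : p1 ^ 2 * Sc ≤ r ^ 2 - Sa :=
      (sqrt_le_sqrt_iff_left_pos (mul_pos (pow_pos h1 2) hSc)).mp ha1
    have hb2 : r ^ 2 - Sa ≤ p2 ^ 2 * Sc := by
      rcases le_or_gt (r ^ 2 - Sa) 0 with h | h
      · nlinarith
      · exact (sqrt_le_sqrt_iff_left_pos h).mp ha2
    constructor
    · rw [hrsq]
      exact Real.sqrt_le_sqrt (by linarith)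
    · rw [hrsq]
      exact Real.sqrt_le_sqrt (by linarith)

/-- With `λ(r) = sqrt(r² − Σ_{m=1}^{i} a_{τ_m}²)/‖c_{τ_{i+1},…,τ_R}‖`,
one has `r ∈ [rᵢ, r_{i+1}]` if and only if `λ(r) ∈ [φ_{τᵢ}⁻¹, φ_{τ_{i+1}}⁻¹]`;
moreover for any such `r` and any unsaturated index `j ∈ {τ_{i+1},…,τ_R}`,
`λ(r)·cⱼ ≤ aⱼ`, so `λ(r)·c` restricted to the unsaturated indices satisfies
the box constraints (0-based indexing: `τ m` is the paper's `τ_{m+1}`). -/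
theorem stmt_5 (R : ℕ) (hR : 1 ≤ R) (a c : Fin R → ℝ)
    (ha : ∀ j, 0 < a j) (hc : ∀ j, 0 < c j) (τ : Equiv.Perm (Fin R))
    (hord : ∀ i j : Fin R, i ≤ j → c (τ j) / a (τ j) ≤ c (τ i) / a (τ i))
    (rseq : ℕ → ℝ)
    (hr0 : rseq 0 = 0)
    (hri : ∀ i, 1 ≤ i → (hiR : i ≤ R) → rseq i =
      Real.sqrt ((c (τ ⟨i - 1, by omega⟩) / a (τ ⟨i - 1, by omega⟩))⁻¹ ^ 2 *
          (∑ m ∈ Finset.univ.filter (fun m : Fin R => i ≤ (m : ℕ)), (c (τ m)) ^ 2) +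
        ∑ m ∈ Finset.univ.filter (fun m : Fin R => (m : ℕ) < i), (a (τ m)) ^ 2))
    (i : ℕ) (hi1 : 1 ≤ i) (hi : i ≤ R - 1)
    (lam : ℝ → ℝ)
    (hlam : ∀ r : ℝ, lam r =
      Real.sqrt (r ^ 2 - ∑ m ∈ Finset.univ.filter (fun m : Fin R => (m : ℕ) < i), (a (τ m)) ^ 2) /
        Real.sqrt (∑ m ∈ Finset.univ.filter (fun m : Fin R => i ≤ (m : ℕ)), (c (τ m)) ^ 2)) :
    (∀ r : ℝ, 0 ≤ r →
      ((r ∈ Set.Icc (rseq i) (rseq (i + 1))) ↔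
        lam r ∈ Set.Icc ((c (τ ⟨i - 1, by omega⟩) / a (τ ⟨i - 1, by omega⟩))⁻¹)
          ((c (τ ⟨i, by omega⟩) / a (τ ⟨i, by omega⟩))⁻¹))) ∧
    (∀ r ∈ Set.Icc (rseq i) (rseq (i + 1)), ∀ m : Fin R, i ≤ (m : ℕ) →
      lam r * c (τ m) ≤ a (τ m)) := by
  have hiR : i < R := by omega
  set Sc : ℝ := ∑ m ∈ Finset.univ.filter (fun m : Fin R => i ≤ (m : ℕ)), (c (τ m)) ^ 2
    with hSc_def
  set Sa : ℝ := ∑ m ∈ Finset.univ.filter (fun m : Fin R => (m : ℕ) < i), (a (τ m)) ^ 2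
    with hSa_def
  have hSa : 0 ≤ Sa := Finset.sum_nonneg fun _ _ => sq_nonneg _
  have hImem : (⟨i, hiR⟩ : Fin R) ∈ Finset.univ.filter (fun m : Fin R => i ≤ (m : ℕ)) := by
    simp
  have hSc : 0 < Sc :=
    Finset.sum_pos' (fun _ _ => sq_nonneg _) ⟨⟨i, hiR⟩, hImem, pow_pos (hc _) 2⟩
  have hφ1 : (0:ℝ) < c (τ ⟨i - 1, by omega⟩) / a (τ ⟨i - 1, by omega⟩) :=
    div_pos (hc _) (ha _)
  have hφ2 : (0:ℝ) < c (τ ⟨i, by omega⟩) / a (τ ⟨i, by omega⟩) :=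
    div_pos (hc _) (ha _)
  have hr_i : rseq i =
      Real.sqrt ((c (τ ⟨i - 1, by omega⟩) / a (τ ⟨i - 1, by omega⟩))⁻¹ ^ 2 * Sc + Sa) :=
    hri i hi1 (by omega)
  have hset1 : (Finset.univ.filter (fun m : Fin R => i + 1 ≤ (m : ℕ))) =
      (Finset.univ.filter (fun m : Fin R => i ≤ (m : ℕ))).erase ⟨i, hiR⟩ := by
    ext m
    simp [Fin.ext_iff]
    omega
  have hset2 : (Finset.univ.filter (fun m : Fin R => (m : ℕ) < i + 1)) =
      insert ⟨i, hiR⟩ (Finset.univ.filter (fun m : Fin R => (m : ℕ) < i)) := by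
    ext m
    simp [Fin.ext_iff]
    omega
  have hnm2 : (⟨i, hiR⟩ : Fin R) ∉ Finset.univ.filter (fun m : Fin R => (m : ℕ) < i) := by
    simp
  have hr_i1 : rseq (i + 1) =
      Real.sqrt ((c (τ ⟨i, by omega⟩) / a (τ ⟨i, by omega⟩))⁻¹ ^ 2 * Sc + Sa) := by
    rw [hri (i + 1) (by omega) (by omega)]
    congr 1
    have hcsplit : (∑ m ∈ Finset.univ.filter (fun m : Fin R => i + 1 ≤ (m : ℕ)),
        (c (τ m)) ^ 2) = Sc - (c (τ ⟨i, hiR⟩)) ^ 2 := by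
      rw [hset1, hSc_def, Finset.sum_erase_eq_sub hImem]
    have hasplit : (∑ m ∈ Finset.univ.filter (fun m : Fin R => (m : ℕ) < i + 1),
        (a (τ m)) ^ 2) = (a (τ ⟨i, hiR⟩)) ^ 2 + Sa := by
      rw [hset2, Finset.sum_insert hnm2, hSa_def]
    have hidx : (⟨i + 1 - 1, by omega⟩ : Fin R) = ⟨i, hiR⟩ := rfl
    rw [hidx, hcsplit, hasplit]
    have hkey : (c (τ ⟨i, hiR⟩) / a (τ ⟨i, hiR⟩))⁻¹ ^ 2 * (c (τ ⟨i, hiR⟩)) ^ 2 =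
        (a (τ ⟨i, hiR⟩)) ^ 2 := by
      have hcne : c (τ ⟨i, hiR⟩) ≠ 0 := (hc _).ne'
      have hane : a (τ ⟨i, hiR⟩) ≠ 0 := (ha _).ne'
      field_simp
    have : ((⟨i, by omega⟩ : Fin R) : Fin R) = ⟨i, hiR⟩ := rfl
    rw [this]
    nlinarith [hkey]
  have hiff : ∀ r : ℝ, 0 ≤ r →
      ((r ∈ Set.Icc (rseq i) (rseq (i + 1))) ↔
        lam r ∈ Set.Icc ((c (τ ⟨i - 1, by omega⟩) / a (τ ⟨i - 1, by omega⟩))⁻¹)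
          ((c (τ ⟨i, by omega⟩) / a (τ ⟨i, by omega⟩))⁻¹)) := by
    intro r hr
    simp only [Set.mem_Icc, hr_i, hr_i1, hlam r]
    exact stmt5_aux Sc Sa _ _ r hSc hSa (by positivity) (by positivity) hr
  refine ⟨hiff, ?_⟩
  intro r hrIcc m hm
  have hr : 0 ≤ r := le_trans (by rw [hr_i]; exact Real.sqrt_nonneg _) hrIcc.1
  have hlam2 : lam r ≤ (c (τ ⟨i, by omega⟩) / a (τ ⟨i, by omega⟩))⁻¹ :=
    ((hiff r hr).mp hrIcc).2
  have hφm : 0 < c (τ m) / a (τ m) := div_pos (hc _) (ha _)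
  have hordm : c (τ m) / a (τ m) ≤ c (τ ⟨i, by omega⟩) / a (τ ⟨i, by omega⟩) :=
    hord ⟨i, by omega⟩ m hm
  have hinv : (c (τ ⟨i, by omega⟩) / a (τ ⟨i, by omega⟩))⁻¹ ≤ (c (τ m) / a (τ m))⁻¹ :=
    one_div_le_one_div_of_le hφm hordm |>.trans_eq (by rw [one_div]) |>.trans_eq rfl
      |> fun h => by simpa [one_div] using h
  have hfinal : lam r * c (τ m) ≤ (c (τ m) / a (τ m))⁻¹ * c (τ m) := by
    have : lam r ≤ (c (τ m) / a (τ m))⁻¹ := le_trans hlam2 hinv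
    exact mul_le_mul_of_nonneg_right this (hc _).le
  have heq : (c (τ m) / a (τ m))⁻¹ * c (τ m) = a (τ m) := by
    have hcne : c (τ m) ≠ 0 := (hc _).ne'
    have hane : a (τ m) ≠ 0 := (ha _).ne'
    field_simp
  linarith [hfinal, heq ▸ hfinal]
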